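/- arXiv:1910.10571 — 2 statements merged into one kernel-verified Lean document; each statement's English description precedes it below -/
import Mathlib

section
/- Let p and q be reals with 2 ≤ p ≤ q, A ∈ ℝ^{n×m}, b ∈ ℝ^n, and C ≥ 1. Suppose x₀ ∈ ℝ^m satisfies Ax₀ = b and ‖x₀‖_q^q ≤ C·‖x‖_q^q for every x with Ax = b. Then for every x* with Ax* = b, ‖x₀‖_p^p ≤ C^{p/q} m^{1−p/q} ‖x*‖_p^p. -/
/-- For `t ≥ 1` and nonnegative `f`, `∑ f i ^ t ≤ (∑ f i) ^ t`. -/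
lemma aux_sum_rpow_le {ι : Type*} (s : Finset ι) (f : ι → ℝ) (hf : ∀ i, 0 ≤ f i)
    {t : ℝ} (ht : 1 ≤ t) : ∑ i ∈ s, f i ^ t ≤ (∑ i ∈ s, f i) ^ t := by
  classical
  induction s using Finset.induction_on with
  | empty => simp [Real.zero_rpow (by linarith : t ≠ 0)]
  | insert _ _ ha ih =>
    rename_i a s'
    rw [Finset.sum_insert ha, Finset.sum_insert ha]
    have hsum : (0 : ℝ) ≤ ∑ i ∈ s', f i := Finset.sum_nonneg fun i _ => hf i
    have key : f a ^ t + (∑ i ∈ s', f i) ^ t ≤ (f a + ∑ i ∈ s', f i) ^ t := by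
      have := NNReal.add_rpow_le_rpow_add ⟨f a, hf a⟩ ⟨∑ i ∈ s', f i, hsum⟩ ht
      have h2 := NNReal.coe_le_coe.2 this
      push_cast at h2
      exact h2
    calc f a ^ t + ∑ i ∈ s', f i ^ t ≤ f a ^ t + (∑ i ∈ s', f i) ^ t := by linarith
      _ ≤ (f a + ∑ i ∈ s', f i) ^ t := key

/-- initial-gap bound in Lemma B.5, IterativeRefinementSmall. -/
theorem stmt_7 {n m : ℕ} {p q : ℝ} (hp : 2 ≤ p) (hpq : p ≤ q)
    (A : Matrix (Fin n) (Fin m) ℝ) (b : Fin n → ℝ) {C : ℝ} (hC : 1 ≤ C)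
    (x₀ : Fin m → ℝ) (hx₀ : A.mulVec x₀ = b)
    (happrox : ∀ x, A.mulVec x = b → (∑ e, |x₀ e| ^ q) ≤ C * ∑ e, |x e| ^ q) :
    ∀ xs, A.mulVec xs = b →
      (∑ e, |x₀ e| ^ p) ≤ C ^ (p / q) * (m : ℝ) ^ (1 - p / q) * ∑ e, |xs e| ^ p := by
  intro xs hxs
  have hp0 : (0 : ℝ) < p := by linarith
  have hq0 : (0 : ℝ) < q := by linarith
  have hqp1 : 1 ≤ q / p := (one_le_div hp0).2 hpq
  have hpq0 : 0 < p / q := div_pos hp0 hq0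
  have hS0 : (0 : ℝ) ≤ ∑ e, |x₀ e| ^ p :=
    Finset.sum_nonneg fun e _ => Real.rpow_nonneg (abs_nonneg _) _
  have hSxs : (0 : ℝ) ≤ ∑ e, |xs e| ^ p :=
    Finset.sum_nonneg fun e _ => Real.rpow_nonneg (abs_nonneg _) _
  have hSxq : (0 : ℝ) ≤ ∑ e, |xs e| ^ q :=
    Finset.sum_nonneg fun e _ => Real.rpow_nonneg (abs_nonneg _) _
  have hSx0q : (0 : ℝ) ≤ ∑ e, |x₀ e| ^ q :=
    Finset.sum_nonneg fun e _ => Real.rpow_nonneg (abs_nonneg _) _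
  -- Step 1: (∑ |x₀|^p)^(q/p) ≤ m^(q/p - 1) * ∑ |x₀|^q
  have step1 : (∑ e, |x₀ e| ^ p) ^ (q / p) ≤ (m : ℝ) ^ (q / p - 1) * ∑ e, |x₀ e| ^ q := by
    have := Real.rpow_sum_le_const_mul_sum_rpow_of_nonneg (Finset.univ : Finset (Fin m))
      (f := fun e => |x₀ e| ^ p) hqp1 (fun i _ => Real.rpow_nonneg (abs_nonneg _) _)
    simp only [Finset.card_univ, Fintype.card_fin] at this
    calc (∑ e, |x₀ e| ^ p) ^ (q / p)
        ≤ (m : ℝ) ^ (q / p - 1) * ∑ e, (|x₀ e| ^ p) ^ (q / p) := this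
      _ = (m : ℝ) ^ (q / p - 1) * ∑ e, |x₀ e| ^ q := by
          congr 1
          refine Finset.sum_congr rfl fun e _ => ?_
          rw [← Real.rpow_mul (abs_nonneg _), mul_div_cancel₀ _ (ne_of_gt hp0)]
  -- Step 2: ∑ |xs|^q ≤ (∑ |xs|^p)^(q/p)
  have step2 : (∑ e, |xs e| ^ q) ≤ (∑ e, |xs e| ^ p) ^ (q / p) := by
    have := aux_sum_rpow_le (Finset.univ : Finset (Fin m)) (fun e => |xs e| ^ p)
      (fun e => Real.rpow_nonneg (abs_nonneg _) _) hqp1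
    calc (∑ e, |xs e| ^ q) = ∑ e, (|xs e| ^ p) ^ (q / p) := by
          refine Finset.sum_congr rfl fun e _ => ?_
          rw [← Real.rpow_mul (abs_nonneg _), mul_div_cancel₀ _ (ne_of_gt hp0)]
      _ ≤ (∑ e, |xs e| ^ p) ^ (q / p) := this
  -- Combine: ∑|x₀|^q ≤ C * ∑|xs|^q ≤ C * (∑|xs|^p)^(q/p)
  have chain : (∑ e, |x₀ e| ^ p) ^ (q / p)
      ≤ (m : ℝ) ^ (q / p - 1) * (C * (∑ e, |xs e| ^ p) ^ (q / p)) := by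
    refine step1.trans ?_
    gcongr
    exact (happrox xs hxs).trans (by gcongr)
  -- Raise to power p/q
  have final := Real.rpow_le_rpow (Real.rpow_nonneg hS0 _) chain (le_of_lt hpq0)
  rw [← Real.rpow_mul hS0, div_mul_div_comm, mul_comm q p, div_self (by positivity),
    Real.rpow_one] at final
  refine final.trans (le_of_eq ?_)
  have hm : (0 : ℝ) ≤ (m : ℝ) := Nat.cast_nonneg _
  have hCq : (0 : ℝ) ≤ C * (∑ e, |xs e| ^ p) ^ (q / p) := by positivity
  have hC0 : (0:ℝ) ≤ C := by linarith
  rw [Real.mul_rpow (Real.rpow_nonneg hm _) hCq]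
  rw [Real.mul_rpow hC0 (Real.rpow_nonneg hSxs _)]
  rw [← Real.rpow_mul hm]
  rw [← Real.rpow_mul hSxs]
  have h1 : (q / p - 1) * (p / q) = 1 - p / q := by field_simp
  have h2 : q / p * (p / q) = 1 := by field_simp
  rw [h1, h2, Real.rpow_one]
  ring
end

section
/- Let p ≥ 2 be real, A ∈ ℝ^{n×m}, g ∈ ℝ^m, r ∈ ℝ^m with nonnegative entries, ν > 0, and α, β ≥ 1. Suppose Δ* maximizes res_p over {Δ : AΔ = 0} with res_p(Δ*) ∈ (ν/2, ν]. If Δ̃ satisfies AΔ̃ = 0, ‖Δ̃‖_∞ ≤ β ν^{1/p}, and g^⊤Δ̃ − 2∑_e r_e Δ̃_e² is at least (1/α) times the optimal value of max{g^⊤Δ − 2∑_e r_e Δ_e² : AΔ = 0, ‖Δ‖_∞ ≤ ν^{1/p}}, then Δ = (4αβ^p m)^{−1/(p−1)}·Δ̃ satisfies res_p(Δ) ≥ res_p(Δ*) / (16(α^p β^p m)^{1/(p−1)}). -/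
/-- The residual objective `res_p(Δ) = g^⊤Δ − 2∑_e r_e Δ_e² − ‖Δ‖_p^p`. -/
noncomputable def res {m : ℕ} (g r : Fin m → ℝ) (p : ℝ) (Δ : Fin m → ℝ) : ℝ :=
  (∑ e, g e * Δ e) - 2 * (∑ e, r e * Δ e ^ 2) - ∑ e, |Δ e| ^ p

private lemma res_smul {m : ℕ} (g r : Fin m → ℝ) (p : ℝ) (Δ : Fin m → ℝ)
    {t : ℝ} (ht : 0 ≤ t) :
    res g r p (fun e => t * Δ e) =
      t * (∑ e, g e * Δ e) - 2 * t ^ 2 * (∑ e, r e * Δ e ^ 2)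
        - t ^ p * ∑ e, |Δ e| ^ p := by
  have h1 : ∑ e, g e * (t * Δ e) = t * ∑ e, g e * Δ e := by
    rw [Finset.mul_sum]; exact Finset.sum_congr rfl fun e _ => by ring
  have h2 : ∑ e, r e * (t * Δ e) ^ 2 = t ^ 2 * ∑ e, r e * Δ e ^ 2 := by
    rw [Finset.mul_sum]; exact Finset.sum_congr rfl fun e _ => by ring
  have h3 : ∑ e, |t * Δ e| ^ p = t ^ p * ∑ e, |Δ e| ^ p := by
    rw [Finset.mul_sum]
    refine Finset.sum_congr rfl fun e _ => ?_
    rw [abs_mul, abs_of_nonneg ht, Real.mul_rpow ht (abs_nonneg _)]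
  unfold res
  rw [h1, h2, h3]; ring

private lemma mulVec_smul_zero {n m : ℕ} (A : Matrix (Fin n) (Fin m) ℝ)
    {Δ : Fin m → ℝ} (h : A.mulVec Δ = 0) (t : ℝ) :
    A.mulVec (fun e => t * Δ e) = 0 := by
  have : (fun e => t * Δ e) = t • Δ := by funext e; simp [smul_eq_mul]
  rw [this, Matrix.mulVec_smul, h, smul_zero]

set_option maxHeartbeats 1600000 in
/-- Corollary 6.3.  The ℓ_∞ constraint `‖Δ‖_∞ ≤ c` is formalized
entrywise, and the optimal value of the box-constrained problem as a supremum. -/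
theorem stmt_16 {n m : ℕ} {p : ℝ} (hp : 2 ≤ p)
    (A : Matrix (Fin n) (Fin m) ℝ) (g r : Fin m → ℝ) (hr : ∀ e, 0 ≤ r e)
    {ν α β : ℝ} (hν : 0 < ν) (hα : 1 ≤ α) (hβ : 1 ≤ β)
    (Δs : Fin m → ℝ) (hAs : A.mulVec Δs = 0)
    (hmax : ∀ Δ, A.mulVec Δ = 0 → res g r p Δ ≤ res g r p Δs)
    (hlo : ν / 2 < res g r p Δs) (hhi : res g r p Δs ≤ ν)
    (Δt : Fin m → ℝ) (hAt : A.mulVec Δt = 0) (hbox : ∀ e, |Δt e| ≤ β * ν ^ (1 / p))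
    (happrox : 1 / α * sSup {y | ∃ Δ : Fin m → ℝ, A.mulVec Δ = 0 ∧
          (∀ e, |Δ e| ≤ ν ^ (1 / p)) ∧
          y = (∑ e, g e * Δ e) - 2 * (∑ e, r e * Δ e ^ 2)}
        ≤ (∑ e, g e * Δt e) - 2 * (∑ e, r e * Δt e ^ 2)) :
    res g r p (fun e => (4 * α * β ^ p * (m : ℝ)) ^ (-(1 / (p - 1))) * Δt e)
      ≥ res g r p Δs / (16 * (α ^ p * β ^ p * (m : ℝ)) ^ (1 / (p - 1))) := by
  have hppos : (0 : ℝ) < p := by linarith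
  have hp1pos : (0:ℝ) < p - 1 := by linarith
  have hαpos : (0 : ℝ) < α := by linarith
  have hβpos : (0 : ℝ) < β := by linarith
  set s : ℝ := res g r p Δs with hs
  set Q1 : ℝ := ∑ e, g e * Δs e with hQ1
  set R : ℝ := ∑ e, r e * Δs e ^ 2 with hR
  set P : ℝ := ∑ e, |Δs e| ^ p with hP
  have hseq : s = Q1 - 2 * R - P := rfl
  set S : Set ℝ := {y | ∃ Δ : Fin m → ℝ, A.mulVec Δ = 0 ∧
      (∀ e, |Δ e| ≤ ν ^ (1 / p)) ∧
      y = (∑ e, g e * Δ e) - 2 * (∑ e, r e * Δ e ^ 2)} with hS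
  set G : ℝ := ∑ e, g e * Δt e with hG
  set Rt : ℝ := ∑ e, r e * Δt e ^ 2 with hRt
  set Pt : ℝ := ∑ e, |Δt e| ^ p with hPt
  have hspos : 0 < s := lt_trans (by positivity) hlo
  -- m ≥ 1
  have hm : 0 < m := by
    rcases Nat.eq_zero_or_pos m with h0 | h; swap
    · exact h
    · exfalso
      have : s = 0 := by rw [hseq, hQ1, hR, hP]; subst h0; simp
      linarith
  clear_value s Q1 R P S G Rt Pt
  have hm1 : (1 : ℝ) ≤ (m : ℝ) := by exact_mod_cast hm
  have hRnn : 0 ≤ R := hR ▸ Finset.sum_nonneg fun e _ => mul_nonneg (hr e) (sq_nonneg _)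
  have hPnn : 0 ≤ P := hP ▸ Finset.sum_nonneg fun e _ => Real.rpow_nonneg (abs_nonneg _) _
  -- Step A: P ≤ (4/3) s
  have h34 : ((3 : ℝ)/4) ^ p ≤ 9/16 := by
    calc ((3:ℝ)/4) ^ p ≤ ((3:ℝ)/4) ^ (2:ℝ) :=
        Real.rpow_le_rpow_of_exponent_ge (by norm_num) (by norm_num) hp
      _ = 9/16 := by
        rw [show (2:ℝ) = ((2:ℕ):ℝ) by norm_num, Real.rpow_natCast]; norm_num
  have hA34 := hmax (fun e => (3/4 : ℝ) * Δs e) (mulVec_smul_zero A hAs _)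
  rw [res_smul g r p Δs (by norm_num : (0:ℝ) ≤ 3/4), ← hQ1, ← hR, ← hP] at hA34
  have hPs : P ≤ (4/3) * s := by
    norm_num at hA34
    have key2 : ((3:ℝ)/4) ^ p * P ≤ 9/16 * P := mul_le_mul_of_nonneg_right h34 hPnn
    linarith [hA34, key2, hRnn, hPnn, hseq]
  -- Step B: entrywise bound on Δs and the scaled point
  set c : ℝ := ((4:ℝ)/3) ^ (1/p) with hc
  have hcpos : 0 < c := Real.rpow_pos_of_pos (by norm_num) _
  have hc1 : 1 ≤ c := by
    rw [hc, show (1:ℝ) = ((4:ℝ)/3) ^ (0:ℝ) by rw [Real.rpow_zero]]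
    exact Real.rpow_le_rpow_of_exponent_le (by norm_num) (by positivity)
  have hc65 : c ≤ 6/5 := by
    have h1 : c ≤ ((4:ℝ)/3) ^ ((1:ℝ)/2) := by
      rw [hc]
      exact Real.rpow_le_rpow_of_exponent_le (by norm_num)
        (by rw [div_le_div_iff₀ hppos (by norm_num)]; linarith)
    have h2 : ((4:ℝ)/3) ^ ((1:ℝ)/2) = Real.sqrt (4/3) := (Real.sqrt_eq_rpow _).symm
    have h3 : Real.sqrt ((4:ℝ)/3) ≤ 6/5 := by
      nlinarith [Real.sq_sqrt (show (0:ℝ) ≤ 4/3 by norm_num), Real.sqrt_nonneg ((4:ℝ)/3)]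
    rw [h2] at h1; linarith
  clear_value c
  have hentry : ∀ e, |Δs e| ≤ c * ν ^ (1/p) := by
    intro e
    have h1 : |Δs e| ^ p ≤ P := by
      rw [hP]
      exact Finset.single_le_sum (f := fun e => |Δs e| ^ p)
        (fun e _ => Real.rpow_nonneg (abs_nonneg _) _) (Finset.mem_univ e)
    have h2 : |Δs e| ^ p ≤ (4/3) * ν := by linarith [h1, hPs, hhi]
    have h3 : (|Δs e| ^ p) ^ p⁻¹ ≤ ((4/3 : ℝ) * ν) ^ p⁻¹ :=
      Real.rpow_le_rpow (Real.rpow_nonneg (abs_nonneg _) _) h2 (by positivity)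
    rw [Real.rpow_rpow_inv (abs_nonneg _) (ne_of_gt hppos)] at h3
    calc |Δs e| ≤ ((4/3 : ℝ) * ν) ^ p⁻¹ := h3
      _ = ((4:ℝ)/3) ^ p⁻¹ * ν ^ p⁻¹ := Real.mul_rpow (by norm_num) hν.le
      _ = c * ν ^ (1/p) := by rw [hc, one_div]
  have hbox' : ∀ e, |c⁻¹ * Δs e| ≤ ν ^ (1/p) := by
    intro e
    rw [abs_mul, abs_of_nonneg (by positivity : (0:ℝ) ≤ c⁻¹)]
    calc c⁻¹ * |Δs e| ≤ c⁻¹ * (c * ν ^ (1/p)) :=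
          mul_le_mul_of_nonneg_left (hentry e) (by positivity)
      _ = ν ^ (1/p) := by field_simp
  -- Step C: lower bound on the sup
  have hBdd : BddAbove S := by
    refine ⟨∑ e, |g e| * ν ^ (1/p), ?_⟩
    rw [hS]
    rintro y ⟨Δ, -, hb, rfl⟩
    have h1 : ∑ e, g e * Δ e ≤ ∑ e, |g e| * ν ^ (1/p) := by
      refine Finset.sum_le_sum fun e _ => ?_
      calc g e * Δ e ≤ |g e * Δ e| := le_abs_self _
        _ = |g e| * |Δ e| := abs_mul _ _
        _ ≤ |g e| * ν ^ (1/p) := mul_le_mul_of_nonneg_left (hb e) (abs_nonneg _)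
    have h2 : 0 ≤ ∑ e, r e * Δ e ^ 2 :=
      Finset.sum_nonneg fun e _ => mul_nonneg (hr e) (sq_nonneg _)
    linarith
  have hmem : (c⁻¹ * Q1 - 2 * (c⁻¹)^2 * R) ∈ S := by
    rw [hS]
    refine ⟨fun e => c⁻¹ * Δs e, mulVec_smul_zero A hAs _, hbox', ?_⟩
    have h1 : ∑ e, g e * (c⁻¹ * Δs e) = c⁻¹ * Q1 := by
      rw [hQ1, Finset.mul_sum]; exact Finset.sum_congr rfl fun e _ => by ring
    have h2 : ∑ e, r e * (c⁻¹ * Δs e) ^ 2 = (c⁻¹)^2 * R := by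
      rw [hR, Finset.mul_sum]; exact Finset.sum_congr rfl fun e _ => by ring
    rw [h1, h2]; ring
  have hγ' : c⁻¹ * s ≤ c⁻¹ * Q1 - 2 * (c⁻¹)^2 * R := by
    have hcinv1 : c⁻¹ ≤ 1 := inv_le_one_of_one_le₀ hc1
    have hcinvpos : 0 < c⁻¹ := inv_pos.mpr hcpos
    have h1 : (c⁻¹)^2 ≤ c⁻¹ := by
      calc (c⁻¹)^2 = c⁻¹ * c⁻¹ := sq c⁻¹
        _ ≤ 1 * c⁻¹ := mul_le_mul_of_nonneg_right hcinv1 hcinvpos.le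
        _ = c⁻¹ := one_mul _
    have h3 : c⁻¹ * s ≤ c⁻¹ * (Q1 - 2 * R) :=
      mul_le_mul_of_nonneg_left (by rw [hseq]; linarith) hcinvpos.le
    have h4 : (c⁻¹)^2 * R ≤ c⁻¹ * R := mul_le_mul_of_nonneg_right h1 hRnn
    have h5 : c⁻¹ * (Q1 - 2 * R) = c⁻¹ * Q1 - 2 * (c⁻¹ * R) := by ring
    linarith
  have hsup : c⁻¹ * s ≤ sSup S := le_trans hγ' (le_csSup hBdd hmem)
  -- Step D: lower bound for γ(Δt)
  have hRtnn : 0 ≤ Rt := hRt ▸ Finset.sum_nonneg fun e _ => mul_nonneg (hr e) (sq_nonneg _)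
  have hPtnn : 0 ≤ Pt := hPt ▸ Finset.sum_nonneg fun e _ => Real.rpow_nonneg (abs_nonneg _) _
  have hγt : c⁻¹ * s / α ≤ G - 2 * Rt := by
    calc c⁻¹ * s / α = 1/α * (c⁻¹ * s) := by ring
      _ ≤ 1/α * sSup S := mul_le_mul_of_nonneg_left hsup (by positivity)
      _ ≤ G - 2 * Rt := happrox
  -- bound on Pt
  have hνp : (ν ^ ((1:ℝ)/p)) ^ p = ν := by
    rw [one_div, Real.rpow_inv_rpow hν.le (ne_of_gt hppos)]
  have hPtb : Pt ≤ (m : ℝ) * (β ^ p * ν) := by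
    have h1 : ∀ e ∈ (Finset.univ : Finset (Fin m)), |Δt e| ^ p ≤ β ^ p * ν := by
      intro e _
      calc |Δt e| ^ p ≤ (β * ν ^ ((1:ℝ)/p)) ^ p :=
            Real.rpow_le_rpow (abs_nonneg _) (hbox e) hppos.le
        _ = β ^ p * ν := by
            rw [Real.mul_rpow hβpos.le (Real.rpow_nonneg hν.le _), hνp]
    calc Pt ≤ (Finset.univ : Finset (Fin m)).card • (β ^ p * ν) := by
          rw [hPt]; exact Finset.sum_le_card_nsmul _ _ _ h1
      _ = (m : ℝ) * (β ^ p * ν) := by simp [Finset.card_univ, nsmul_eq_mul]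
  -- the scaling factor
  have hβp1 : (1:ℝ) ≤ β ^ p := by
    rw [show (1:ℝ) = β ^ (0:ℝ) by rw [Real.rpow_zero]]
    exact Real.rpow_le_rpow_of_exponent_le hβ hppos.le
  set M : ℝ := 4 * α * β ^ p * (m : ℝ) with hM
  have hMpos : 0 < M := by rw [hM]; positivity
  have hM4 : (4:ℝ) ≤ M := by
    rw [hM]
    have h1 : (1:ℝ) * 1 ≤ α * β ^ p := mul_le_mul hα hβp1 zero_le_one (by linarith)
    have h2 : (1:ℝ) * 1 ≤ (α * β ^ p) * (m:ℝ) :=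
      mul_le_mul (by linarith) hm1 zero_le_one (by positivity)
    calc (4:ℝ) = 4 * ((1:ℝ) * 1) := by norm_num
      _ ≤ 4 * ((α * β ^ p) * (m:ℝ)) := by
          exact mul_le_mul_of_nonneg_left h2 (by norm_num)
      _ = 4 * α * β ^ p * (m:ℝ) := by ring
  set lam : ℝ := M ^ (-(1 / (p - 1))) with hlam
  have hlampos : 0 < lam := hlam ▸ Real.rpow_pos_of_pos hMpos _
  have hlam1 : lam ≤ 1 := by
    rw [hlam]
    refine Real.rpow_le_one_of_one_le_of_nonpos (by linarith) ?_
    rw [neg_nonpos]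
    positivity
  clear_value M lam
  have hne : p - 1 ≠ 0 := ne_of_gt hp1pos
  have hlamp1 : lam ^ (p - 1) = M⁻¹ := by
    rw [hlam, ← Real.rpow_mul hMpos.le]
    rw [show -(1 / (p - 1)) * (p - 1) = -1 by field_simp]
    exact Real.rpow_neg_one M
  have hlamp : lam ^ p = lam * M⁻¹ := by
    have he : p = 1 + (p - 1) := by ring
    rw [he, Real.rpow_add hlampos, Real.rpow_one, hlamp1]
  -- expand res of the scaled Δt
  have hres : res g r p (fun e => lam * Δt e)
      = lam * G - 2 * lam ^ 2 * Rt - lam ^ p * Pt := by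
    rw [res_smul g r p Δt hlampos.le, ← hG, ← hRt, ← hPt]
  -- lower bounds
  have step1 : lam * (G - 2 * Rt) - lam ^ p * Pt ≤ res g r p (fun e => lam * Δt e) := by
    rw [hres]
    have h1 : lam ^ 2 ≤ lam := by
      calc lam ^ 2 = lam * lam := sq lam
        _ ≤ 1 * lam := mul_le_mul_of_nonneg_right hlam1 hlampos.le
        _ = lam := one_mul _
    have h4 : lam ^ 2 * Rt ≤ lam * Rt := mul_le_mul_of_nonneg_right h1 hRtnn
    have h5 : lam * (G - 2 * Rt) = lam * G - 2 * (lam * Rt) := by ring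
    linarith
  have step2 : lam * (c⁻¹ * s / α) ≤ lam * (G - 2 * Rt) :=
    mul_le_mul_of_nonneg_left hγt hlampos.le
  have step3 : lam ^ p * Pt ≤ lam * (ν / (4 * α)) := by
    rw [hlamp]
    have h2 : M⁻¹ * ((m:ℝ) * (β ^ p * ν)) = ν / (4 * α) := by
      rw [hM]
      have hmne : ((m:ℝ)) ≠ 0 := by positivity
      have hbne : β ^ p ≠ 0 := by positivity
      field_simp
    calc lam * M⁻¹ * Pt ≤ lam * M⁻¹ * ((m:ℝ) * (β ^ p * ν)) :=
          mul_le_mul_of_nonneg_left hPtb (by positivity)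
      _ = lam * (M⁻¹ * ((m:ℝ) * (β ^ p * ν))) := by ring
      _ = lam * (ν / (4 * α)) := by rw [h2]
  have hν2s : ν ≤ 2 * s := by linarith
  have step4 : lam * (ν / (4 * α)) ≤ lam * (s / (2 * α)) := by
    have : ν / (4 * α) ≤ s / (2 * α) := by
      rw [div_le_div_iff₀ (by positivity) (by positivity)]
      linarith [mul_le_mul_of_nonneg_right hν2s hαpos.le]
    exact mul_le_mul_of_nonneg_left this hlampos.le
  have hcinv : (5:ℝ)/6 ≤ c⁻¹ := by
    rw [le_inv_comm₀ (by norm_num) hcpos]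
    linarith
  have main : lam * s / (3 * α) ≤ res g r p (fun e => lam * Δt e) := by
    have h2 : lam * s / (3 * α) ≤ lam * (c⁻¹ * s / α) - lam * (s / (2 * α)) := by
      have hq : s / (3 * α) ≤ c⁻¹ * s / α - s / (2 * α) := by
        have h0 : 0 ≤ s * (c⁻¹ - 5/6) / α :=
          div_nonneg (mul_nonneg hspos.le (by linarith)) hαpos.le
        have heq : c⁻¹ * s / α - s / (2 * α) - s / (3 * α) = s * (c⁻¹ - 5/6) / α := by
          field_simp; ring
        linarith
      calc lam * s / (3 * α) = lam * (s / (3 * α)) := by ring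
        _ ≤ lam * (c⁻¹ * s / α - s / (2 * α)) := mul_le_mul_of_nonneg_left hq hlampos.le
        _ = lam * (c⁻¹ * s / α) - lam * (s / (2 * α)) := by ring
    linarith [step1, step2, step3, step4]
  -- final comparison of constants
  set K : ℝ := (α ^ p * β ^ p * (m : ℝ)) ^ (1 / (p - 1)) with hK
  have hKpos : 0 < K := hK ▸ Real.rpow_pos_of_pos (by positivity) _
  clear_value K
  have hKlam : α / 4 ≤ K * lam := by
    have hαp : α ^ p = α ^ (p - 1) * α := by
      conv_lhs => rw [show p = (p - 1) + 1 by ring]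
      rw [Real.rpow_add hαpos, Real.rpow_one]
    have hmne : ((m:ℝ)) ≠ 0 := by positivity
    have hbne : (β : ℝ) ^ p ≠ 0 := by positivity
    have hαne : α ≠ 0 := ne_of_gt hαpos
    have hKlam_eq : K * lam = α / (4 : ℝ) ^ (1 / (p - 1)) := by
      rw [hK, hlam, Real.rpow_neg hMpos.le, ← div_eq_mul_inv,
        ← Real.div_rpow (by positivity) hMpos.le, hM,
        show α ^ p * β ^ p * (m:ℝ) / (4 * α * β ^ p * (m:ℝ)) = α ^ (p - 1) / 4 from by
          rw [hαp]; field_simp,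
        Real.div_rpow (Real.rpow_nonneg hαpos.le _) (by norm_num), one_div,
        Real.rpow_rpow_inv hαpos.le hne, ← one_div]
    have h4q : (4:ℝ) ^ (1 / (p - 1)) ≤ 4 := by
      calc (4:ℝ) ^ (1 / (p - 1)) ≤ (4:ℝ) ^ (1:ℝ) :=
          Real.rpow_le_rpow_of_exponent_le (by norm_num)
            (by rw [div_le_one hp1pos]; linarith)
        _ = 4 := Real.rpow_one _
    have h4qpos : 0 < (4:ℝ) ^ (1 / (p - 1)) := Real.rpow_pos_of_pos (by norm_num) _
    rw [hKlam_eq, div_le_div_iff₀ (by norm_num) h4qpos]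
    calc α * (4:ℝ) ^ (1 / (p - 1)) ≤ α * 4 := mul_le_mul_of_nonneg_left h4q hαpos.le
      _ = α * 4 := rfl
  have final : s / (16 * K) ≤ lam * s / (3 * α) := by
    rw [div_le_div_iff₀ (by positivity) (by positivity)]
    have h := mul_le_mul_of_nonneg_right hKlam hspos.le
    have h2 : 0 ≤ K * lam * s := by positivity
    calc s * (3 * α) = 12 * (α / 4 * s) := by ring
      _ ≤ 12 * (K * lam * s) := by linarith
      _ ≤ 16 * (K * lam * s) := by linarith
      _ = lam * s * (16 * K) := by ring
  exact le_trans final main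
end
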